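/- Suppose E₀ : [0,∞) → [0,∞) is differentiable, D₀ : [0,∞) → [0,∞), E₀'(t) + D₀(t) ≤ 0 for all t, and E₀(t) ≤ C(1+t)^{-1/β} for some β > 0. Then (1+t)^{-1} ∫₀^t (1+t')^{1/β + 1} D₀(t') dt' ≤ C' for all t ≥ 0. -/
import Mathlib


open MeasureTheory Real intervalIntegral

/-- Weighted dissipation bound: if E₀' + D₀ ≤ 0 and E₀(t) ≤ C(1+t)^{-1/β}, then
    (1+t)^{-1} ∫₀^t (1+t')^{1/β+1} D₀(t') dt' ≤ C'. -/
theorem stmt13 (E₀ E₀' D₀ : ℝ → ℝ) (C β : ℝ) (hC : 0 < C) (hβ : 0 < β)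
    (hEpos : ∀ t, 0 ≤ t → 0 ≤ E₀ t)
    (hDpos : ∀ t, 0 ≤ t → 0 ≤ D₀ t)
    (hderiv : ∀ t, 0 ≤ t → HasDerivAt E₀ (E₀' t) t)
    (hDint : ∀ t : ℝ, IntervalIntegrable D₀ volume 0 t)
    (hineq : ∀ t, 0 ≤ t → E₀' t + D₀ t ≤ 0)
    (hdecay : ∀ t, 0 ≤ t → E₀ t ≤ C * (1 + t) ^ (-(1 / β))) :
    ∃ C' : ℝ, 0 < C' ∧ ∀ t, 0 ≤ t →
      (1 + t)⁻¹ * (∫ t' in (0:ℝ)..t, (1 + t') ^ (1 / β + 1) * D₀ t') ≤ C' := by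
  set p : ℝ := 1 / β + 1 with hp
  have hp1 : (1:ℝ) ≤ p := by
    have h : 0 < 1 / β := by positivity
    rw [hp]; linarith
  refine ⟨E₀ 0 + p * C, by nlinarith [hEpos 0 le_rfl], fun t ht => ?_⟩
  set f : ℝ → ℝ := fun s => (1 + s) ^ p * E₀ s with hf
  set φ : ℝ → ℝ := fun s => p * C - (1 + s) ^ p * D₀ s with hφ
  -- integrability of s ↦ (1+s)^p * D₀ s on [0,t]
  have hgD : IntervalIntegrable (fun s => (1 + s) ^ p * D₀ s) volume 0 t := by
    apply (hDint t).continuousOn_mul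
    exact ContinuousOn.rpow_const (by fun_prop) (fun x hx => Or.inr (by linarith))
  have hφint : IntegrableOn φ (Set.Icc 0 t) volume := by
    have h1 : IntervalIntegrable φ volume 0 t :=
      (_root_.intervalIntegrable_const).sub hgD
    exact (intervalIntegrable_iff_integrableOn_Icc_of_le ht).mp h1
  set g' : ℝ → ℝ := fun x => p * (1 + x) ^ (p - 1) * E₀ x + (1 + x) ^ p * E₀' x
    with hg'
  have hcontF : ContinuousOn f (Set.Icc 0 t) := by
    apply ContinuousOn.mul
    · exact ContinuousOn.rpow_const (by fun_prop)
        (fun x hx => Or.inr (by positivity))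
    · intro x hx
      exact ((hderiv x hx.1).continuousAt).continuousWithinAt
  have hderivF : ∀ x ∈ Set.Ioo 0 t, HasDerivWithinAt f (g' x) (Set.Ioi x) x := by
    intro x hx
    have hx0 : (0:ℝ) ≤ x := hx.1.le
    have h1x : (0:ℝ) < 1 + x := by linarith
    have hr : HasDerivAt (fun s : ℝ => (1 + s) ^ p)
        (p * (1 + x) ^ (p - 1)) x := by
      have := HasDerivAt.rpow_const (p := p) ((hasDerivAt_id x).const_add 1)
        (Or.inl (ne_of_gt h1x))
      simpa using this
    have h := hr.mul (hderiv x hx0)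
    exact h.hasDerivWithinAt
  have hbound : ∀ x ∈ Set.Ioo 0 t, g' x ≤ φ x := by
    intro x hx
    have hx0 : (0:ℝ) ≤ x := hx.1.le
    have h1x : (0:ℝ) < 1 + x := by linarith
    have hE' : E₀' x ≤ -D₀ x := by linarith [hineq x hx0]
    have hpow : (0:ℝ) < (1 + x) ^ p := rpow_pos_of_pos h1x p
    have h2 : (1 + x) ^ p * E₀' x ≤ -((1 + x) ^ p * D₀ x) := by
      have := mul_le_mul_of_nonneg_left hE' hpow.le
      linarith [this]
    have h3 : p * (1 + x) ^ (p - 1) * E₀ x ≤ p * C := by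
      have hE : E₀ x ≤ C * (1 + x) ^ (-(1 / β)) := hdecay x hx0
      have hpow1 : (0:ℝ) < (1 + x) ^ (p - 1) := rpow_pos_of_pos h1x _
      have hEx : 0 ≤ E₀ x := hEpos x hx0
      have h4 : p * (1 + x) ^ (p - 1) * E₀ x ≤
          p * (1 + x) ^ (p - 1) * (C * (1 + x) ^ (-(1 / β))) := by
        apply mul_le_mul_of_nonneg_left hE
        positivity
      calc p * (1 + x) ^ (p - 1) * E₀ x
          ≤ p * (1 + x) ^ (p - 1) * (C * (1 + x) ^ (-(1 / β))) := h4
        _ = p * C * ((1 + x) ^ (p - 1) * (1 + x) ^ (-(1 / β))) := by ring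
        _ = p * C := by
            rw [← rpow_add h1x]
            have : p - 1 + -(1 / β) = 0 := by rw [hp]; ring
            rw [this, rpow_zero, mul_one]
    simp only [hg', hφ]
    linarith
  have key : f t - f 0 ≤ ∫ y in (0:ℝ)..t, φ y :=
    sub_le_integral_of_hasDeriv_right_of_le ht hcontF hderivF hφint hbound
  -- unfold the integral of φ
  have hintφ : ∫ y in (0:ℝ)..t, φ y =
      p * C * t - ∫ y in (0:ℝ)..t, (1 + y) ^ p * D₀ y := by
    rw [hφ, intervalIntegral.integral_sub _root_.intervalIntegrable_const hgD,
      intervalIntegral.integral_const, smul_eq_mul, sub_zero, mul_comm]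
  have hf0 : f 0 = E₀ 0 := by simp [hf]
  have hft : 0 ≤ f t := by
    have h1t : (0:ℝ) < 1 + t := by linarith
    have := hEpos t ht
    have := rpow_pos_of_pos h1t p
    positivity
  have hInt : (∫ y in (0:ℝ)..t, (1 + y) ^ p * D₀ y) ≤ E₀ 0 + p * C * t := by
    rw [hintφ] at key
    rw [hf0] at key
    linarith
  have h1t : (0:ℝ) < 1 + t := by linarith
  rw [inv_mul_le_iff₀ h1t]
  calc (∫ y in (0:ℝ)..t, (1 + y) ^ p * D₀ y) ≤ E₀ 0 + p * C * t := hInt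
    _ ≤ (E₀ 0 + p * C) * (1 + t) := by
        have := hEpos 0 le_rfl
        nlinarith
    _ = (1 + t) * (E₀ 0 + p * C) := by ring
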